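/- If z is an involution in S∞ and w = w₁ w₂ ⋯ w_l is an orthogonal Hecke word for z with l ≥ 2, then the word w₂ w₁ w₃ ⋯ w_l obtained by swapping the first two letters is also an orthogonal Hecke word for z. -/
import Mathlib


/-- The Demazure (0-Hecke) product of a permutation with the simple
transposition `s_i = (i, i+1)`. -/
def hecke (π : Equiv.Perm ℕ) (i : ℕ) : Equiv.Perm ℕ :=
  if π i < π (i + 1) then π * Equiv.swap i (i + 1) else π

/-- The 0-Hecke (Demazure) product of a word. -/
def heckeProd (w : List ℕ) : Equiv.Perm ℕ := w.foldl hecke 1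

/-- A word on the positive integers. -/
def PosWord (w : List ℕ) : Prop := ∀ x ∈ w, 0 < x

/-- Left Demazure product: `U_i U_z = U_{demLeft i z}` in the 0-Hecke
algebra. -/
def demLeft (i : ℕ) (z : Equiv.Perm ℕ) : Equiv.Perm ℕ :=
  if z⁻¹ i < z⁻¹ (i + 1) then Equiv.swap i (i + 1) * z else z

/-- The twisted 0-Hecke action on involutions: `z ∗ i` is determined by
`U_{z ∗ i} = U_i U_z U_i`. -/
def oAct (z : Equiv.Perm ℕ) (i : ℕ) : Equiv.Perm ℕ := hecke (demLeft i z) i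



local notation "S" => fun i => Equiv.swap i (i+1)

lemma oAct_one (i : ℕ) : oAct 1 i = S i := by
  unfold oAct demLeft hecke
  simp [Equiv.swap_apply_def]

lemma oAct_swap_far (a b : ℕ) (h : a + 1 < b ∨ b + 1 < a) :
    oAct (S a) b = S b * S a := by
  have h1 : (S a)⁻¹ b < (S a)⁻¹ (b+1) := by
    simp only [Equiv.swap_inv, Equiv.swap_apply_def]
    split_ifs <;> omega
  have h2 : ¬ ((S b * S a) b < (S b * S a) (b+1)) := by
    simp only [Equiv.Perm.mul_apply, Equiv.swap_apply_def]
    split_ifs <;> omega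
  unfold oAct demLeft hecke
  rw [if_pos h1, if_neg h2]

lemma oAct_swap_adj (a : ℕ) : oAct (S a) (a+1) = S (a+1) * S a * S (a+1) := by
  have h1 : (S a)⁻¹ (a+1) < (S a)⁻¹ (a+1+1) := by
    simp only [Equiv.swap_inv, Equiv.swap_apply_def]
    split_ifs <;> omega
  have h2 : (S (a+1) * S a) (a+1) < (S (a+1) * S a) (a+1+1) := by
    simp only [Equiv.Perm.mul_apply, Equiv.swap_apply_def]
    split_ifs <;> omega
  unfold oAct demLeft hecke
  rw [if_pos h1, if_pos h2]

lemma oAct_swap_adj' (a : ℕ) : oAct (S (a+1)) a = S a * S (a+1) * S a := by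
  have h1 : (S (a+1))⁻¹ a < (S (a+1))⁻¹ (a+1) := by
    simp only [Equiv.swap_inv, Equiv.swap_apply_def]
    split_ifs <;> omega
  have h2 : (S a * S (a+1)) a < (S a * S (a+1)) (a+1) := by
    simp only [Equiv.Perm.mul_apply, Equiv.swap_apply_def]
    split_ifs <;> omega
  unfold oAct demLeft hecke
  rw [if_pos h1, if_pos h2]

set_option maxHeartbeats 1600000 in
lemma key (a b : ℕ) : oAct (oAct 1 a) b = oAct (oAct 1 b) a := by
  rw [oAct_one, oAct_one]
  obtain h | h | h | h | h : a = b ∨ b = a+1 ∨ a = b+1 ∨ a+1 < b ∨ b+1 < a := by omega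
  · subst h; rfl
  · subst h
    rw [oAct_swap_adj, oAct_swap_adj']
    ext x
    simp only [Equiv.Perm.mul_apply, Equiv.swap_apply_def]
    split_ifs <;> omega
  · subst h
    rw [oAct_swap_adj, oAct_swap_adj']
    ext x
    simp only [Equiv.Perm.mul_apply, Equiv.swap_apply_def]
    split_ifs <;> omega
  · rw [oAct_swap_far a b (Or.inl h), oAct_swap_far b a (Or.inr h)]
    ext x
    simp only [Equiv.Perm.mul_apply, Equiv.swap_apply_def]
    split_ifs <;> omega
  · rw [oAct_swap_far a b (Or.inr h), oAct_swap_far b a (Or.inl h)]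
    ext x
    simp only [Equiv.Perm.mul_apply, Equiv.swap_apply_def]
    split_ifs <;> omega

/-- if `w₁ w₂ ⋯ w_l` is an orthogonal Hecke word for an
involution `z` (with `l ≥ 2`), then so is `w₂ w₁ w₃ ⋯ w_l`. -/
theorem orthogonal_hecke_word_swap_first_two
    (a b : ℕ) (rest : List ℕ) (ha : 0 < a) (hb : 0 < b) (hrest : PosWord rest)
    (z : Equiv.Perm ℕ)
    (h : List.foldl oAct 1 (a :: b :: rest) = z) :
    List.foldl oAct 1 (b :: a :: rest) = z := by
  simp only [List.foldl_cons] at h ⊢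
  rw [key b a]
  exact h
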